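/- Let L be a convex body in ℝ² of diameter at most D containing the origin, and let u be a unit vector. Let Ψ(r u + L) denote the angle subtended at the origin O by the translated body r u + L (the angular measure of the set of directions v with (O + ℝ₊ v) ∩ (ru + L) ≠ ∅). Then r·Ψ(ru + L) → W_u(L) as r → ∞, where W_u(L) is the width of L in the direction orthogonal to u; moreover the convergence is uniform over unit vectors u and over all such convex bodies L of diameter ≤ D containing the origin. -/

import Mathlib

set_option maxHeartbeats 1000000

open MeasureTheory Pointwise

/-- The point of `ℝ² = EuclideanSpace ℝ (Fin 2)` with coordinates `a`, `b`. -/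
noncomputable def e2 (a b : ℝ) : EuclideanSpace ℝ (Fin 2) :=
  (EuclideanSpace.equiv (Fin 2) ℝ).symm ![a, b]

/-- The angle of vision of a set `A ⊆ ℝ²` from the origin: the angular measure of the set of
directions `v` such that the ray `ℝ₊ v` from the origin meets `A`. -/
noncomputable def angleOfVision (A : Set (EuclideanSpace ℝ (Fin 2))) : ℝ :=
  (volume {θ : ℝ | θ ∈ Set.Ico 0 (2*Real.pi) ∧
      ∃ t : ℝ, 0 ≤ t ∧ t • e2 (Real.cos θ) (Real.sin θ) ∈ A}).toReal

/-- The width `W_u(L)` of `L` in the direction `v = u^⊥` orthogonal to `u`: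
`sup_{x,y ∈ L} ⟨y - x, v⟩`. -/
noncomputable def widthOrth (u : EuclideanSpace ℝ (Fin 2))
    (L : Set (EuclideanSpace ℝ (Fin 2))) : ℝ :=
  sSup ((fun p : EuclideanSpace ℝ (Fin 2) × EuclideanSpace ℝ (Fin 2) =>
    (inner ℝ (p.2 - p.1) (e2 (-(u 1)) (u 0)) : ℝ)) '' (L ×ˢ L))

namespace AngleVisionAux

open Real Set

lemma meas_periodic (c d : ℝ) (hcd : c ≤ d) (hlt : d - c < 2*π) :
    volume {θ : ℝ | θ ∈ Set.Ico 0 (2*π) ∧ ∃ k : ℤ, θ - 2*π*k ∈ Set.Icc c d}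
      = ENNReal.ofReal (d - c) := by
  have h2π : (0:ℝ) < 2*π := by positivity
  set T : Set ℝ := ⋃ k : ℤ, (fun θ : ℝ => θ - 2*π*k) ⁻¹' Set.Icc c d with hT
  have hTmem : ∀ θ : ℝ, θ ∈ T ↔ ∃ k : ℤ, θ - 2*π*k ∈ Set.Icc c d := by
    intro θ
    simp only [hT, Set.mem_iUnion, Set.mem_preimage]
  have hTmeas : MeasurableSet T :=
    MeasurableSet.iUnion fun k => (measurable_sub_const _) measurableSet_Icc
  have hTinv : ∀ g : AddSubgroup.zmultiples (2*π), (fun x : ℝ => g +ᵥ x) ⁻¹' T = T := by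
    rintro ⟨g, n, rfl⟩
    ext θ
    simp only [Set.mem_preimage, AddSubgroup.vadd_def]
    rw [hTmem, hTmem]
    simp only [vadd_eq_add, zsmul_eq_mul]
    constructor
    · rintro ⟨k, hk⟩
      refine ⟨k - n, ?_⟩
      have e : θ - 2*π*((k - n : ℤ):ℝ) = (n:ℝ)*(2*π) + θ - 2*π*k := by push_cast; ring
      rw [e]; exact hk
    · rintro ⟨k, hk⟩
      refine ⟨k + n, ?_⟩
      have e : (n:ℝ)*(2*π) + θ - 2*π*((k + n : ℤ) : ℝ) = θ - 2*π*k := by push_cast; ring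
      show (n:ℝ)*(2*π) + θ - 2*π*((k + n : ℤ) : ℝ) ∈ Set.Icc c d
      rw [e]; exact hk
  have F1 := isAddFundamentalDomain_Ioc h2π 0 (volume : Measure ℝ)
  have F2 := isAddFundamentalDomain_Ioc h2π c (volume : Measure ℝ)
  have hkey : volume (T ∩ Set.Ioc 0 (0 + 2*π)) = volume (T ∩ Set.Ioc c (c + 2*π)) :=
    MeasureTheory.IsAddFundamentalDomain.measure_set_eq F1 F2 hTmeas hTinv
  have hR : T ∩ Set.Ioc c (c + 2*π) = Set.Ioc c d ∪ {c + 2*π} := by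
    ext θ
    rw [Set.mem_inter_iff, hTmem]
    simp only [Set.mem_Ioc, Set.mem_Icc, Set.mem_union, Set.mem_singleton_iff]
    constructor
    · rintro ⟨⟨k, hk1, hk2⟩, hθ1, hθ2⟩
      have hk01 : k = 0 ∨ k = 1 := by
        have h1 : 2*π*k ≤ 2*π*1 := by nlinarith
        have h2 : 2*π*(-1:ℝ) < 2*π*k := by nlinarith
        have h1' := (mul_le_mul_iff_right₀ h2π).mp h1
        have h2' := (mul_lt_mul_iff_right₀ h2π).mp h2
        have : k ≤ 1 := by exact_mod_cast h1'
        have : -1 < k := by exact_mod_cast h2'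
        omega
      rcases hk01 with rfl | rfl
      · left; constructor
        · exact hθ1
        · push_cast at hk2; linarith
      · right
        push_cast at hk1
        linarith
    · rintro (⟨h1, h2⟩ | rfl)
      · exact ⟨⟨0, by push_cast; constructor <;> linarith⟩, h1, by linarith⟩
      · exact ⟨⟨1, by constructor <;> push_cast <;> linarith⟩, by linarith, le_refl _⟩
  have hRv : volume (T ∩ Set.Ioc c (c + 2*π)) = ENNReal.ofReal (d - c) := by
    rw [hR]
    have h0 : volume ({c + 2*π} : Set ℝ) = 0 := measure_singleton _
    refine le_antisymm ?_ ?_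
    · calc volume (Set.Ioc c d ∪ {c + 2*π}) ≤ volume (Set.Ioc c d) + volume ({c + 2*π} : Set ℝ) :=
        measure_union_le _ _
      _ = ENNReal.ofReal (d - c) := by rw [h0, add_zero, Real.volume_Ioc]
    · rw [← Real.volume_Ioc]
      exact measure_mono Set.subset_union_left
  have hL : {θ : ℝ | θ ∈ Set.Ico 0 (2*π) ∧ ∃ k : ℤ, θ - 2*π*k ∈ Set.Icc c d}
      = T ∩ Set.Ico 0 (2*π) := by
    ext θ
    rw [Set.mem_inter_iff, hTmem]
    simp only [Set.mem_setOf_eq]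
    tauto
  rw [hL]
  have hae : (T ∩ Set.Ico (0:ℝ) (2*π) : Set ℝ) =ᵐ[volume] (T ∩ Set.Ioc (0:ℝ) (2*π) : Set ℝ) :=
    (Filter.EventuallyEq.refl _ _).inter MeasureTheory.Ico_ae_eq_Ioc
  rw [measure_congr hae, show Set.Ioc (0:ℝ) (2*π) = Set.Ioc 0 (0 + 2*π) by rw [zero_add],
    hkey, hRv]

lemma arctan_le_self' {x : ℝ} (hx : 0 ≤ x) : Real.arctan x ≤ x := by
  have hmono : MonotoneOn (fun y : ℝ => y - Real.arctan y) (Set.Ici 0) := by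
    have hdiff : ∀ y : ℝ, HasDerivAt (fun y : ℝ => y - Real.arctan y) (1 - 1/(1+y^2)) y :=
      fun y => (hasDerivAt_id y).sub (Real.hasDerivAt_arctan y)
    apply monotoneOn_of_deriv_nonneg (convex_Ici 0)
      (Continuous.continuousOn (by continuity))
      (fun y _ => (hdiff y).differentiableAt.differentiableWithinAt)
    intro y hy
    rw [(hdiff y).deriv]
    have : (0:ℝ) < 1 + y^2 := by positivity
    rw [sub_nonneg, div_le_one this]
    nlinarith
  have := hmono (Set.self_mem_Ici) (Set.mem_Ici.mpr hx) hx
  simpa [Real.arctan_zero] using this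

lemma self_sub_cube_le_arctan {x : ℝ} (hx : 0 ≤ x) : x - x^3 ≤ Real.arctan x := by
  have hmono : MonotoneOn (fun y : ℝ => Real.arctan y - (y - y^3)) (Set.Ici 0) := by
    have hdiff : ∀ y : ℝ, HasDerivAt (fun y : ℝ => Real.arctan y - (y - y^3))
        (1/(1+y^2) - (1 - 3*y^2)) y := by
      intro y
      have h1 : HasDerivAt (fun y : ℝ => y - y^3) (1 - 3*y^2) y := by
        have := (hasDerivAt_id' y).sub (hasDerivAt_pow 3 y)
        simp at this
        exact this
      exact (Real.hasDerivAt_arctan y).sub h1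
    apply monotoneOn_of_deriv_nonneg (convex_Ici 0)
      (Continuous.continuousOn (by continuity))
      (fun y _ => (hdiff y).differentiableAt.differentiableWithinAt)
    intro y hy
    rw [(hdiff y).deriv]
    have h2 : (0:ℝ) < 1 + y^2 := by positivity
    rw [sub_nonneg, ← sub_nonneg]
    have : 1/(1+y^2) - (1 - 3*y^2) = (2*y^2 + 3*y^4)/(1+y^2) := by
      field_simp; ring
    rw [this]
    positivity
  have := hmono (Set.self_mem_Ici) (Set.mem_Ici.mpr hx) hx
  simp only [Real.arctan_zero] at this
  nlinarith [this]

lemma cos_tan_iff {m M : ℝ} (hmM : m ≤ M) (ψ : ℝ) :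
    (0 < Real.cos ψ ∧ Real.sin ψ / Real.cos ψ ∈ Set.Icc m M) ↔
      ∃ k : ℤ, ψ - 2*π*k ∈ Set.Icc (Real.arctan m) (Real.arctan M) := by
  constructor
  · rintro ⟨hcos, hm, hM⟩
    refine ⟨round (ψ / (2*π)), ?_⟩
    set k := round (ψ / (2*π)) with hk
    set ψ' := ψ - 2*π*k with hψ'
    have h2π : (0:ℝ) < 2*π := by positivity
    have habs : |ψ'| ≤ π := by
      have h1 : |ψ / (2*π) - k| ≤ 1/2 := abs_sub_round _
      have : ψ' = (ψ / (2*π) - k) * (2*π) := by field_simp; exact hψ'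
      rw [this, abs_mul, abs_of_pos h2π]
      nlinarith [h1]
    have hcos' : Real.cos ψ' = Real.cos ψ := by
      rw [hψ', show ψ - 2*π*(k:ℝ) = ψ + (-k : ℤ) * (2*π) by push_cast; ring,
        Real.cos_add_int_mul_two_pi]
    have hsin' : Real.sin ψ' = Real.sin ψ := by
      rw [hψ', show ψ - 2*π*(k:ℝ) = ψ + (-k : ℤ) * (2*π) by push_cast; ring,
        Real.sin_add_int_mul_two_pi]
    have hcpos : 0 < Real.cos ψ' := by rw [hcos']; exact hcos
    have hψ'mem : ψ' ∈ Set.Ioo (-(π/2)) (π/2) := by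
      rw [abs_le] at habs
      constructor
      · by_contra h
        push_neg at h
        have h1 : π/2 ≤ -ψ' := by linarith
        have h2 : -ψ' ≤ π + π/2 := by linarith [Real.pi_pos]
        have := Real.cos_nonpos_of_pi_div_two_le_of_le h1 h2
        rw [Real.cos_neg] at this
        linarith
      · by_contra h
        push_neg at h
        have := Real.cos_nonpos_of_pi_div_two_le_of_le h (by linarith [Real.pi_pos])
        linarith
    have htan : Real.tan ψ' = Real.sin ψ / Real.cos ψ := by
      rw [Real.tan_eq_sin_div_cos, hsin', hcos']
    have harc : Real.arctan (Real.tan ψ') = ψ' := Real.arctan_tan hψ'mem.1 hψ'mem.2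
    constructor
    · calc Real.arctan m ≤ Real.arctan (Real.tan ψ') :=
        Real.arctan_strictMono.monotone (by rw [htan]; exact hm)
      _ = ψ' := harc
    · calc ψ' = Real.arctan (Real.tan ψ') := harc.symm
      _ ≤ Real.arctan M := Real.arctan_strictMono.monotone (by rw [htan]; exact hM)
  · rintro ⟨k, h1, h2⟩
    set α := ψ - 2*π*k with hα
    have hαIoo : α ∈ Set.Ioo (-(π/2)) (π/2) :=
      ⟨lt_of_lt_of_le (Real.neg_pi_div_two_lt_arctan m) h1,
       lt_of_le_of_lt h2 (Real.arctan_lt_pi_div_two M)⟩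
    have hψα : ψ = α + (k : ℤ) * (2*π) := by push_cast; ring
    have hcos : Real.cos ψ = Real.cos α := by rw [hψα, Real.cos_add_int_mul_two_pi]
    have hsin : Real.sin ψ = Real.sin α := by rw [hψα, Real.sin_add_int_mul_two_pi]
    have hcpos : 0 < Real.cos α := Real.cos_pos_of_mem_Ioo hαIoo
    refine ⟨by rw [hcos]; exact hcpos, ?_⟩
    have htan : Real.sin ψ / Real.cos ψ = Real.tan α := by
      rw [hsin, hcos, Real.tan_eq_sin_div_cos]
    rw [htan]
    constructor
    · calc m = Real.tan (Real.arctan m) := (Real.tan_arctan m).symm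
      _ ≤ Real.tan α := by
          apply Real.strictMonoOn_tan.monotoneOn (Real.arctan_mem_Ioo m) hαIoo h1
    · have := Real.strictMonoOn_tan.monotoneOn hαIoo (Real.arctan_mem_Ioo M) h2
      rwa [Real.tan_arctan] at this

lemma arctan_est {D r M B B₁ a₁ a₂ : ℝ} (hD : 0 < D) (hr : 2*D+1 ≤ r)
    (hM : M = B₁/(r + a₁)) (hB₁ : B₁ ≤ B) (hBD : B ≤ D) (hB0 : 0 ≤ B)
    (ha₁ : |a₁| ≤ D) (ha₂ : |a₂| ≤ D) (hM₂ : B/(r + a₂) ≤ M) :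
    |r * Real.arctan M - B| ≤ (2*D^2 + 8*D^3)/r := by
  obtain ⟨ha₁l, ha₁r⟩ := abs_le.mp ha₁
  obtain ⟨ha₂l, ha₂r⟩ := abs_le.mp ha₂
  have hr0 : (0:ℝ) < r := by linarith
  have hr1 : (1:ℝ) ≤ r := by linarith
  have h1 : (0:ℝ) < r + a₁ := by linarith
  have h2 : (0:ℝ) < r + a₂ := by linarith
  have hrD : (0:ℝ) < r - D := by linarith
  have hM0 : 0 ≤ M := le_trans (div_nonneg hB0 h2.le) hM₂
  have hB1eq : M * (r + a₁) = B₁ := by rw [hM]; field_simp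
  set x := B/(r + a₂) with hx
  have hxeq : x * (r + a₂) = B := by rw [hx]; field_simp
  have hx0 : 0 ≤ x := div_nonneg hB0 h2.le
  have hxrD : x * (r - D) ≤ D := by nlinarith
  have hxr : x * r ≤ 2*D := by nlinarith
  have hMrD : M * (r - D) ≤ D := by nlinarith
  have hMr : M * r ≤ 2*D := by nlinarith
  rw [abs_le]
  constructor
  · rw [neg_le, neg_sub]
    have harc1 : Real.arctan x ≤ Real.arctan M := Real.arctan_strictMono.monotone hM₂
    have harc2 : x - x^3 ≤ Real.arctan x := self_sub_cube_le_arctan hx0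
    have step : B - r * Real.arctan M ≤ x*D + r*x^3 := by nlinarith
    have hcube : (x*r)^3 ≤ (2*D)^3 := by
      apply pow_le_pow_left₀ (by positivity) hxr
    have h4 : r^2 * x^3 ≤ r^3 * x^3 := by
      nlinarith [mul_nonneg (mul_nonneg (sq_nonneg r) (sub_nonneg.mpr hr1)) (pow_nonneg hx0 3)]
    have h3 : r^2 * x^3 ≤ 8*D^3 := by
      calc r^2 * x^3 ≤ r^3 * x^3 := h4
        _ = (x*r)^3 := by ring
        _ ≤ (2*D)^3 := hcube
        _ = 8*D^3 := by ring
    have h5 : x*D*r ≤ 2*D^2 := by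
      have := mul_le_mul_of_nonneg_right hxr hD.le
      have e : x*D*r = (x*r)*D := by ring
      rw [e]; linarith
    have final : (x*D + r*x^3) * r ≤ 2*D^2 + 8*D^3 := by
      have e : (x*D + r*x^3)*r = x*D*r + r^2*x^3 := by ring
      rw [e]; linarith [h3, h5]
    calc B - r * Real.arctan M ≤ x*D + r*x^3 := step
      _ ≤ (2*D^2 + 8*D^3)/r := by rw [le_div_iff₀ hr0]; exact final
  · have harc : Real.arctan M ≤ M := arctan_le_self' hM0
    have step : r * Real.arctan M - B ≤ r*M - B := by
      have := mul_le_mul_of_nonneg_left harc hr0.le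
      linarith
    have hMB : M*(r+a₁) ≤ B := by rw [hB1eq]; exact hB₁
    have t1 : r*(M*(r+a₁)) ≤ r*B := mul_le_mul_of_nonneg_left hMB hr0.le
    have t2 : (r*M)*(-a₁) ≤ (r*M)*D := mul_le_mul_of_nonneg_left (by linarith) (mul_nonneg hr0.le hM0)
    have t3 : (M*r)*D ≤ (2*D)*D := mul_le_mul_of_nonneg_right hMr hD.le
    have hD3 : (0:ℝ) ≤ 8*D^3 := by positivity
    have final : (r*M - B) * r ≤ 2*D^2 + 8*D^3 := by linarith [t1, t2, t3, hD3]
    calc r * Real.arctan M - B ≤ r*M - B := step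
      _ ≤ (2*D^2 + 8*D^3)/r := by rw [le_div_iff₀ hr0]; exact final

lemma inner_expand (x y : EuclideanSpace ℝ (Fin 2)) :
    (inner ℝ x y : ℝ) = x 0 * y 0 + x 1 * y 1 := by
  simp [PiLp.inner_apply, Fin.sum_univ_two, mul_comm]

lemma unit_sq {u : EuclideanSpace ℝ (Fin 2)} (hu : ‖u‖ = 1) : u 0^2 + u 1^2 = 1 := by
  have := inner_expand u u
  rw [real_inner_self_eq_norm_sq, hu] at this
  nlinarith [this]

lemma eq_of_inner {u : EuclideanSpace ℝ (Fin 2)} (hu : ‖u‖ = 1)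
    {x y : EuclideanSpace ℝ (Fin 2)}
    (h1 : (inner ℝ x u : ℝ) = inner ℝ y u)
    (h2 : (inner ℝ x (e2 (-(u 1)) (u 0)) : ℝ) = inner ℝ y (e2 (-(u 1)) (u 0))) : x = y := by
  have hu2 := unit_sq hu
  rw [inner_expand, inner_expand] at h1 h2
  have e0 : e2 (-(u 1)) (u 0) 0 = -(u 1) := rfl
  have e1 : e2 (-(u 1)) (u 0) 1 = u 0 := rfl
  rw [e0, e1] at h2
  ext i
  fin_cases i
  · show x 0 = y 0
    linear_combination u 0 * h1 - u 1 * h2 + (y 0 - x 0) * hu2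
  · show x 1 = y 1
    linear_combination u 1 * h1 + u 0 * h2 + (y 1 - x 1) * hu2

end AngleVisionAux

open AngleVisionAux Real Set

/-- `r·Ψ(ru + L) → W_u(L)` as `r → ∞`, uniformly over unit vectors `u` and over
convex bodies `L` of diameter `≤ D` containing the origin. -/
theorem angle_of_vision_asymptotics (D : ℝ) (hD : 0 < D) :
    ∀ ε > 0, ∃ r₀ : ℝ, ∀ r ≥ r₀, ∀ u : EuclideanSpace ℝ (Fin 2), ‖u‖ = 1 →
      ∀ L : Set (EuclideanSpace ℝ (Fin 2)), Convex ℝ L → IsCompact L → 0 ∈ L →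
        Metric.diam L ≤ D →
        |r * angleOfVision ((r • u) +ᵥ L) - widthOrth u L| ≤ ε := by
  intro ε hε
  set C : ℝ := 2*D^2 + 8*D^3 with hC
  refine ⟨max (2*D+1) (2*C/ε), ?_⟩
  intro r hr u hu L hLconv hLcomp h0L hdiam
  have hr1 : 2*D+1 ≤ r := le_trans (le_max_left _ _) hr
  have hrε : 2*C/ε ≤ r := le_trans (le_max_right _ _) hr
  have hr0 : (0:ℝ) < r := by linarith
  have hrD : D < r := by linarith
  have hu2 := unit_sq hu
  set v : EuclideanSpace ℝ (Fin 2) := e2 (-(u 1)) (u 0) with hv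
  have hv0 : v 0 = -(u 1) := rfl
  have hv1 : v 1 = u 0 := rfl
  have hvnorm : ‖v‖ = 1 := by
    have : ‖v‖^2 = (inner ℝ v v : ℝ) := (real_inner_self_eq_norm_sq v).symm
    rw [inner_expand, hv0, hv1] at this
    nlinarith [norm_nonneg v]
  -- basic bounds on points of L
  have hyD : ∀ y ∈ L, ‖y‖ ≤ D := by
    intro y hy
    have h := Metric.dist_le_diam_of_mem hLcomp.isBounded hy h0L
    rw [dist_zero_right] at h
    linarith [hdiam]
  have haD : ∀ y ∈ L, |(inner ℝ y u : ℝ)| ≤ D := by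
    intro y hy
    calc |(inner ℝ y u : ℝ)| ≤ ‖y‖ * ‖u‖ := abs_real_inner_le_norm y u
      _ = ‖y‖ := by rw [hu, mul_one]
      _ ≤ D := hyD y hy
  have hbD : ∀ y ∈ L, |(inner ℝ y v : ℝ)| ≤ D := by
    intro y hy
    calc |(inner ℝ y v : ℝ)| ≤ ‖y‖ * ‖v‖ := abs_real_inner_le_norm y v
      _ = ‖y‖ := by rw [hvnorm, mul_one]
      _ ≤ D := hyD y hy
  have hden : ∀ y ∈ L, (0:ℝ) < r + inner ℝ y u := by
    intro y hy
    have := (abs_le.mp (haD y hy)).1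
    linarith
  -- membership in the translated body
  have memA : ∀ x : EuclideanSpace ℝ (Fin 2),
      x ∈ (r • u) +ᵥ L ↔ ∃ y ∈ L, x = r • u + y := by
    intro x
    rw [Set.mem_vadd_set]
    constructor
    · rintro ⟨y, hy, rfl⟩; exact ⟨y, hy, rfl⟩
    · rintro ⟨y, hy, rfl⟩; exact ⟨y, hy, rfl⟩
  have huu : (inner ℝ u u : ℝ) = 1 := by
    rw [real_inner_self_eq_norm_mul_norm, hu]; norm_num
  have huv : (inner ℝ u v : ℝ) = 0 := by
    rw [inner_expand, hv0, hv1]; ring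
  have hiu : ∀ y : EuclideanSpace ℝ (Fin 2), (inner ℝ (r • u + y) u : ℝ) = r + inner ℝ y u := by
    intro y
    rw [inner_add_left, real_inner_smul_left, huu, mul_one]
  have hiv : ∀ y : EuclideanSpace ℝ (Fin 2), (inner ℝ (r • u + y) v : ℝ) = inner ℝ y v := by
    intro y
    rw [inner_add_left, real_inner_smul_left, huv, mul_zero, zero_add]
  -- the function b and its range
  have hbcont : Continuous (fun y : EuclideanSpace ℝ (Fin 2) => (inner ℝ y v : ℝ)) :=
    Continuous.inner continuous_id continuous_const
  have hacont : Continuous (fun y : EuclideanSpace ℝ (Fin 2) => (inner ℝ y u : ℝ)) :=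
    Continuous.inner continuous_id continuous_const
  set K : Set ℝ := (fun y : EuclideanSpace ℝ (Fin 2) => (inner ℝ y v : ℝ)) '' L with hK
  have hKc : IsCompact K := hLcomp.image hbcont
  have hKconn : IsConnected K :=
    ⟨⟨_, Set.mem_image_of_mem _ h0L⟩, hLconv.isPreconnected.image _ hbcont.continuousOn⟩
  set bm := sInf K with hbm
  set bp := sSup K with hbp
  have hKeq : K = Set.Icc bm bp := eq_Icc_of_connected_compact hKconn hKc
  have h0K : (0:ℝ) ∈ K := ⟨0, h0L, by simp⟩
  have hKne : K.Nonempty := ⟨0, h0K⟩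
  have hbm0 : bm ≤ 0 := csInf_le hKc.bddBelow h0K
  have h0bp : 0 ≤ bp := le_csSup hKc.bddAbove h0K
  have hbpK : bp ∈ K := hKc.sSup_mem hKne
  have hbmK : bm ∈ K := hKc.sInf_mem hKne
  have hbpD : bp ≤ D := by
    obtain ⟨y, hy, hyeq⟩ := hbpK
    have hyeq' : (inner ℝ y v : ℝ) = bp := hyeq
    have := (abs_le.mp (hbD y hy)).2
    linarith
  have hbmD : -D ≤ bm := by
    obtain ⟨y, hy, hyeq⟩ := hbmK
    have hyeq' : (inner ℝ y v : ℝ) = bm := hyeq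
    have := (abs_le.mp (hbD y hy)).1
    linarith
  -- width equals bp - bm
  have hwidth : widthOrth u L = bp - bm := by
    apply IsGreatest.csSup_eq
    constructor
    · obtain ⟨yp, hypL, hypeq⟩ := hbpK
      obtain ⟨ym, hymL, hymeq⟩ := hbmK
      refine ⟨(ym, yp), Set.mk_mem_prod hymL hypL, ?_⟩
      show (inner ℝ (yp - ym) (e2 (-(u 1)) (u 0)) : ℝ) = bp - bm
      rw [inner_sub_left]
      have hypeq' : (inner ℝ yp v : ℝ) = bp := hypeq
      have hymeq' : (inner ℝ ym v : ℝ) = bm := hymeq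
      rw [show (e2 (-(u 1)) (u 0)) = v from rfl, hypeq', hymeq']
    · rintro z ⟨⟨y1, y2⟩, hmem, rfl⟩
      have hy1 : y1 ∈ L := hmem.1
      have hy2 : y2 ∈ L := hmem.2
      show (inner ℝ (y2 - y1) (e2 (-(u 1)) (u 0)) : ℝ) ≤ bp - bm
      rw [inner_sub_left, show (e2 (-(u 1)) (u 0)) = v from rfl]
      have h1 : (inner ℝ y2 v : ℝ) ≤ bp := le_csSup hKc.bddAbove ⟨y2, hy2, rfl⟩
      have h2 : bm ≤ (inner ℝ y1 v : ℝ) := csInf_le hKc.bddBelow ⟨y1, hy1, rfl⟩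
      linarith
  -- the ratio function and its range
  set ρ : EuclideanSpace ℝ (Fin 2) → ℝ :=
    fun y => (inner ℝ y v : ℝ) / (r + (inner ℝ y u : ℝ)) with hρ
  have hρcont : ContinuousOn ρ L :=
    hbcont.continuousOn.div ((continuous_const.add hacont).continuousOn)
      (fun y hy => (hden y hy).ne')
  set Kρ : Set ℝ := ρ '' L with hKρ
  have hKρc : IsCompact Kρ := hLcomp.image_of_continuousOn hρcont
  have hKρconn : IsConnected Kρ :=
    ⟨⟨_, Set.mem_image_of_mem _ h0L⟩, hLconv.isPreconnected.image _ hρcont⟩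
  set m := sInf Kρ with hm
  set M := sSup Kρ with hM
  have hKρeq : Kρ = Set.Icc m M := eq_Icc_of_connected_compact hKρconn hKρc
  have h0Kρ : (0:ℝ) ∈ Kρ := ⟨0, h0L, by simp [hρ]⟩
  have hKρne : Kρ.Nonempty := ⟨0, h0Kρ⟩
  have hm0 : m ≤ 0 := csInf_le hKρc.bddBelow h0Kρ
  have h0M : 0 ≤ M := le_csSup hKρc.bddAbove h0Kρ
  have hmM : m ≤ M := le_trans hm0 h0M
  -- the angle φ of u
  set z : ℂ := Complex.I * (u 1) + (u 0) with hz
  have hzre : z.re = u 0 := by simp [hz]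
  have hzim : z.im = u 1 := by simp [hz]
  have hzne : z ≠ 0 := by
    intro h
    rw [Complex.ext_iff] at h
    simp [hzre, hzim] at *
    nlinarith [h.1, h.2, hu2]
  have hzabs : ‖z‖ = 1 := by
    have h := Complex.sq_norm z
    rw [Complex.normSq_apply, hzre, hzim] at h
    nlinarith [norm_nonneg z, hu2]
  set φ : ℝ := Complex.arg z with hφ
  have hcosφ : Real.cos φ = u 0 := by
    rw [hφ, Complex.cos_arg hzne, hzre, hzabs, div_one]
  have hsinφ : Real.sin φ = u 1 := by
    rw [hφ, Complex.sin_arg, hzim, hzabs, div_one]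
  -- inner ℝ products with the direction vector
  have hea : ∀ θ : ℝ, (inner ℝ (e2 (Real.cos θ) (Real.sin θ)) u : ℝ) = Real.cos (θ - φ) := by
    intro θ
    rw [inner_expand]
    show Real.cos θ * u 0 + Real.sin θ * u 1 = _
    rw [← hcosφ, ← hsinφ, Real.cos_sub]
  have heb : ∀ θ : ℝ, (inner ℝ (e2 (Real.cos θ) (Real.sin θ)) v : ℝ) = Real.sin (θ - φ) := by
    intro θ
    rw [inner_expand, hv0, hv1]
    show Real.cos θ * -(u 1) + Real.sin θ * u 0 = _
    rw [← hcosφ, ← hsinφ, Real.sin_sub]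
    ring
  -- the angle-set identity
  have hAset : {θ : ℝ | θ ∈ Set.Ico 0 (2*π) ∧
      ∃ t : ℝ, 0 ≤ t ∧ t • e2 (Real.cos θ) (Real.sin θ) ∈ (r • u) +ᵥ L}
      = {θ : ℝ | θ ∈ Set.Ico 0 (2*π) ∧
        ∃ k : ℤ, θ - 2*π*k ∈ Set.Icc (Real.arctan m + φ) (Real.arctan M + φ)} := by
    ext θ
    simp only [Set.mem_setOf_eq]
    refine and_congr_right fun _ => ?_
    have key : (∃ t : ℝ, 0 ≤ t ∧ t • e2 (Real.cos θ) (Real.sin θ) ∈ (r • u) +ᵥ L) ↔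
        (0 < Real.cos (θ - φ) ∧
          Real.sin (θ - φ) / Real.cos (θ - φ) ∈ Set.Icc m M) := by
      constructor
      · rintro ⟨t, ht0, htA⟩
        rw [memA] at htA
        obtain ⟨y, hyL, hxy⟩ := htA
        have h1 : t * Real.cos (θ - φ) = r + inner ℝ y u := by
          rw [← hea θ, ← real_inner_smul_left, hxy, hiu]
        have h2 : t * Real.sin (θ - φ) = inner ℝ y v := by
          rw [← heb θ, ← real_inner_smul_left, hxy, hiv]
        have hpos : (0:ℝ) < r + inner ℝ y u := hden y hyL
        have ht : 0 < t := by
          rcases eq_or_lt_of_le ht0 with h | h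
          · exfalso; rw [← h, zero_mul] at h1; linarith
          · exact h
        have hcos : 0 < Real.cos (θ - φ) := by
          by_contra h
          push_neg at h
          nlinarith [mul_le_mul_of_nonneg_left h ht.le]
        refine ⟨hcos, ?_⟩
        rw [← hKρeq]
        refine ⟨y, hyL, ?_⟩
        show (inner ℝ y v : ℝ) / (r + inner ℝ y u) = _
        rw [← h1, ← h2, mul_div_mul_left _ _ ht.ne']
      · rintro ⟨hcos, hρmem⟩
        rw [← hKρeq] at hρmem
        obtain ⟨y, hyL, hyρ⟩ := hρmem
        have hpos : (0:ℝ) < r + inner ℝ y u := hden y hyL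
        refine ⟨(r + inner ℝ y u) / Real.cos (θ - φ), div_nonneg hpos.le hcos.le, ?_⟩
        rw [memA]
        refine ⟨y, hyL, ?_⟩
        apply eq_of_inner hu
        · rw [real_inner_smul_left, hea θ, div_mul_cancel₀ _ hcos.ne', hiu]
        · rw [real_inner_smul_left, heb θ]
          show (r + (inner ℝ y u : ℝ)) / Real.cos (θ - φ) * Real.sin (θ - φ)
              = (inner ℝ (r • u + y) (e2 (-(u 1)) (u 0)) : ℝ)
          rw [show (e2 (-(u 1)) (u 0)) = v from rfl, hiv]
          have hyρ' : (inner ℝ y v : ℝ) / (r + inner ℝ y u) = Real.sin (θ - φ) / Real.cos (θ - φ) :=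
            hyρ
          rw [div_mul_eq_mul_div, mul_div_assoc, ← hyρ', mul_comm,
            div_mul_cancel₀ _ hpos.ne']
    rw [key, show θ - φ = θ - φ from rfl]
    rw [cos_tan_iff hmM (θ - φ)]
    constructor
    · rintro ⟨k, h1, h2⟩
      exact ⟨k, by constructor <;> [linarith [h1]; linarith [h2]]⟩
    · rintro ⟨k, h1, h2⟩
      exact ⟨k, by constructor <;> [linarith [h1]; linarith [h2]]⟩
  -- compute the angle of vision
  have hcd : Real.arctan m + φ ≤ Real.arctan M + φ :=
    add_le_add_left (Real.arctan_strictMono.monotone hmM) φ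
  have hlt : (Real.arctan M + φ) - (Real.arctan m + φ) < 2*π := by
    have h1 := Real.arctan_lt_pi_div_two M
    have h2 := Real.neg_pi_div_two_lt_arctan m
    have := Real.pi_pos
    linarith
  have hAngle : angleOfVision ((r • u) +ᵥ L) = Real.arctan M - Real.arctan m := by
    unfold angleOfVision
    rw [hAset, meas_periodic _ _ hcd hlt, ENNReal.toReal_ofReal (by linarith [hcd])]
    ring
  -- estimates
  have hMK : M ∈ Kρ := hKρc.sSup_mem hKρne
  have hmK : m ∈ Kρ := hKρc.sInf_mem hKρne
  obtain ⟨y1, hy1L, hy1⟩ := hMK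
  obtain ⟨y2, hy2L, hy2⟩ := hbpK
  obtain ⟨y3, hy3L, hy3⟩ := hmK
  obtain ⟨y4, hy4L, hy4⟩ := hbmK
  have estM : |r * Real.arctan M - bp| ≤ C/r := by
    apply arctan_est hD hr1 (B₁ := (inner ℝ y1 v : ℝ)) (a₁ := (inner ℝ y1 u : ℝ))
      (a₂ := (inner ℝ y2 u : ℝ))
    · exact hy1.symm
    · exact le_csSup hKc.bddAbove ⟨y1, hy1L, rfl⟩
    · exact hbpD
    · exact h0bp
    · exact haD y1 hy1L
    · exact haD y2 hy2L
    · have : ρ y2 ≤ M := le_csSup hKρc.bddAbove ⟨y2, hy2L, rfl⟩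
      rw [hρ] at this
      rw [← hy2]
      exact this
  have estm : |r * Real.arctan m - bm| ≤ C/r := by
    have h := arctan_est (M := -m) (B := -bm) (B₁ := -(inner ℝ y3 v : ℝ))
      (a₁ := (inner ℝ y3 u : ℝ)) (a₂ := (inner ℝ y4 u : ℝ)) hD hr1
      (by rw [← hy3]; show -((inner ℝ y3 v : ℝ)/(r + inner ℝ y3 u)) = _; rw [neg_div])
      (by have : bm ≤ (inner ℝ y3 v : ℝ) := csInf_le hKc.bddBelow ⟨y3, hy3L, rfl⟩; linarith)
      (by linarith)
      (by linarith)
      (haD y3 hy3L)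
      (haD y4 hy4L)
      (by
        have : m ≤ ρ y4 := csInf_le hKρc.bddBelow ⟨y4, hy4L, rfl⟩
        rw [hρ] at this
        rw [← hy4, neg_div]
        linarith)
    rw [Real.arctan_neg] at h
    rw [show r * Real.arctan m - bm = -(r * -Real.arctan m - -bm) by ring, abs_neg]
    exact h
  -- conclude
  rw [hAngle, hwidth]
  have hstep : |r * (Real.arctan M - Real.arctan m) - (bp - bm)| ≤ 2*C/r := by
    have e : r * (Real.arctan M - Real.arctan m) - (bp - bm)
        = (r * Real.arctan M - bp) - (r * Real.arctan m - bm) := by ring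
    rw [e]
    calc |(r * Real.arctan M - bp) - (r * Real.arctan m - bm)|
        ≤ |r * Real.arctan M - bp| + |r * Real.arctan m - bm| := abs_sub _ _
      _ ≤ C/r + C/r := add_le_add estM estm
      _ = 2*C/r := by ring
  have hfinal : 2*C/r ≤ ε := by
    rw [div_le_iff₀ hr0]
    have := (div_le_iff₀ hε).mp hrε
    linarith
  linarith [hstep, hfinal]
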